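/- Fix integers m ≥ 1 and 0 ≤ k ≤ n. Then ( Π_{i=0}^{k−1} (m+1+2i) ) · Σ_{R ∈ Φ_m^n} Σ_{b : Fin m → ℕ, Σ_j b(j) = k, b(j) ≤ R(j) for all j} Π_{j=1}^{m} C(R(j), b(j))² = C(n+m−1, n) · C(n, k) · Π_{i=0}^{k−1} (2(n−k)+m+1+2i). (Equivalently, Σ_R Σ_b Π_j C(R_j,b_j)² = C(n+m−1,n)·C(n,k)·(n−k+(m+1)/2)_k/((m+1)/2)_k.) -/

import Mathlib

open Finset Finset.Nat

namespace Stmt10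

/-- hockey stick, range form -/
lemma sum_range_choose_eq (N q : ℕ) : ∑ j ∈ range N, j.choose q = N.choose (q + 1) := by
  induction N with
  | zero => simp
  | succ N ih => rw [Finset.sum_range_succ, ih, Nat.choose_succ_succ N q, Nat.add_comm]

/-- Vandermonde on the upper index -/
lemma L0 (N p q : ℕ) :
    ∑ ij ∈ antidiagonal N, ij.1.choose p * ij.2.choose q = (N + 1).choose (p + q + 1) := by
  induction N generalizing p q with
  | zero =>
    simp only [antidiagonal_zero, Finset.sum_singleton]
    cases p <;> cases q <;> simp [Nat.choose]
  | succ N ih =>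
    cases p with
    | zero =>
      simp only [Nat.choose_zero_right, one_mul, Nat.zero_add]
      rw [sum_antidiagonal_eq_sum_range_succ_mk]
      rw [← Finset.sum_range_reflect]
      simp only [Nat.succ_sub_succ]
      calc ∑ j ∈ range (N + 2), (N + 1 - (N + 1 - j)).choose q
          = ∑ j ∈ range (N + 2), j.choose q := by
            apply Finset.sum_congr rfl
            intro j hj
            congr 1
            have := Finset.mem_range.mp hj
            omega
        _ = (N + 2).choose (q + 1) := sum_range_choose_eq _ _
    | succ p =>
      rw [sum_antidiagonal_succ]
      simp only [Nat.choose_eq_zero_of_lt (Nat.succ_pos p), Nat.zero_mul, Nat.zero_add]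
      have : ∀ pr : ℕ × ℕ, (pr.1 + 1).choose (p + 1) * pr.2.choose q
          = pr.1.choose p * pr.2.choose q + pr.1.choose (p + 1) * pr.2.choose q := by
        intro pr; rw [Nat.choose_succ_succ, Nat.add_mul]
      rw [Finset.sum_congr rfl fun pr _ => this pr, Finset.sum_add_distrib, ih, ih]
      have h1 : p + 1 + q + 1 = (p + q + 1) + 1 := by omega
      rw [h1, Nat.choose_succ_succ (N + 1)]

/-- shifted Vandermonde on the upper index -/
lemma L2 (n a b c d : ℕ) :
    ∑ ij ∈ antidiagonal n, (ij.1 + a).choose (b + a) * (ij.2 + c).choose (d + c)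
      = (n + a + c + 1).choose (a + b + c + d + 1) := by
  induction a generalizing b with
  | zero =>
    induction c generalizing d with
    | zero => simpa using L0 n b d
    | succ c ihc =>
      have key : ∀ pr : ℕ × ℕ, (pr.1 + 0).choose (b + 0) * (pr.2 + (c+1)).choose (d + (c+1))
          = (pr.1 + 0).choose (b + 0) * (pr.2 + c).choose (d + c)
            + (pr.1 + 0).choose (b + 0) * (pr.2 + c).choose ((d+1) + c) := by
        intro pr
        have h1 : pr.2 + (c+1) = (pr.2 + c) + 1 := by omega
        have h2 : d + (c+1) = (d + c) + 1 := by omega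
        have h5 : d + c + 1 = d + 1 + c := by omega
        rw [h1, h2, Nat.choose_succ_succ, Nat.mul_add]
        simp only [Nat.succ_eq_add_one]
        rw [h5]
      rw [Finset.sum_congr rfl fun pr _ => key pr, Finset.sum_add_distrib, ihc, ihc]
      have h3 : n + 0 + (c + 1) + 1 = (n + 0 + c + 1) + 1 := by omega
      have h4 : 0 + b + (c + 1) + d + 1 = (0 + b + c + d + 1) + 1 := by omega
      have h6 : 0 + b + c + (d + 1) + 1 = (0 + b + c + d + 1) + 1 := by omega
      rw [h3, h4, h6]
      exact (Nat.choose_succ_succ _ _).symm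
  | succ a iha =>
    have key : ∀ pr : ℕ × ℕ, (pr.1 + (a+1)).choose (b + (a+1)) * (pr.2 + c).choose (d + c)
        = (pr.1 + a).choose (b + a) * (pr.2 + c).choose (d + c)
          + (pr.1 + a).choose ((b+1) + a) * (pr.2 + c).choose (d + c) := by
      intro pr
      have h1 : pr.1 + (a+1) = (pr.1 + a) + 1 := by omega
      have h2 : b + (a+1) = (b + a) + 1 := by omega
      have h5 : b + a + 1 = b + 1 + a := by omega
      rw [h1, h2, Nat.choose_succ_succ, Nat.add_mul]
      simp only [Nat.succ_eq_add_one]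
      rw [h5]
    rw [Finset.sum_congr rfl fun pr _ => key pr, Finset.sum_add_distrib, iha, iha]
    have h3 : n + (a + 1) + c + 1 = (n + a + c + 1) + 1 := by omega
    have h4 : (a + 1) + b + c + d + 1 = (a + b + c + d + 1) + 1 := by omega
    have h6 : a + (b + 1) + c + d + 1 = (a + b + c + d + 1) + 1 := by omega
    rw [h3, h4, h6]
    exact (Nat.choose_succ_succ _ _).symm






lemma adT_succ_eq (m n : ℕ) :
    antidiagonalTuple (m+1) n
      = (antidiagonal n).biUnion
          (fun ij => (antidiagonalTuple m ij.2).map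
            ⟨Fin.cons ij.1, Fin.cons_right_injective _⟩) := by
  ext x
  simp only [mem_antidiagonalTuple, Finset.mem_biUnion, Finset.mem_map,
    Function.Embedding.coeFn_mk, Finset.HasAntidiagonal.mem_antidiagonal, Prod.exists]
  constructor
  · intro h
    refine ⟨x 0, ∑ i : Fin m, x i.succ, by rw [← h, Fin.sum_univ_succ], Fin.tail x, ?_, ?_⟩
    · rfl
    · exact Fin.cons_self_tail x
  · rintro ⟨i, j, hij, y, hy, rfl⟩
    rw [Fin.sum_univ_succ, Fin.cons_zero]
    simp only [Fin.cons_succ]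
    rw [hy, hij]

lemma sum_adT_succ {M : Type*} [AddCommMonoid M] (m n : ℕ) (F : (Fin (m+1) → ℕ) → M) :
    ∑ x ∈ antidiagonalTuple (m+1) n, F x
      = ∑ ij ∈ antidiagonal n, ∑ y ∈ antidiagonalTuple m ij.2, F (Fin.cons ij.1 y) := by
  rw [adT_succ_eq, Finset.sum_biUnion]
  · refine Finset.sum_congr rfl fun ij _ => ?_
    rw [Finset.sum_map]
    rfl
  · intro p hp q hq hpq
    simp only [Function.onFun]
    rw [Finset.disjoint_left]
    rintro x hx hx'
    obtain ⟨y, hy, rfl⟩ := Finset.mem_map.mp hx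
    obtain ⟨z, hz, hzx⟩ := Finset.mem_map.mp hx'
    apply hpq
    have h0 : q.1 = p.1 := by
      have := congrArg (fun f => f 0) hzx
      simpa using this
    have := Finset.HasAntidiagonal.mem_antidiagonal.mp hp
    have := Finset.HasAntidiagonal.mem_antidiagonal.mp hq
    exact Prod.ext h0.symm (by omega)

/-- Vandermonde over compositions, with shifts -/
lemma sum_adT_choose (M : ℕ) :
    ∀ (n : ℕ) (s c : Fin (M+1) → ℕ),
    ∑ R ∈ antidiagonalTuple (M+1) n, ∏ j, (R j + s j).choose (c j + s j)
      = (n + ∑ j, s j + M).choose ((∑ j, c j) + (∑ j, s j) + M) := by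
  induction M with
  | zero =>
    intro n s c
    simp [Fin.sum_univ_one]
  | succ M ih =>
    intro n s c
    rw [sum_adT_succ]
    have inner : ∀ ij : ℕ × ℕ,
        ∑ y ∈ antidiagonalTuple (M+1) ij.2, ∏ j, ((Fin.cons ij.1 y : Fin (M+2) → ℕ) j + s j).choose (c j + s j)
          = (ij.1 + s 0).choose (c 0 + s 0) *
              ((ij.2 + ((∑ j : Fin (M+1), s j.succ) + M)).choose
                ((∑ j : Fin (M+1), c j.succ) + ((∑ j : Fin (M+1), s j.succ) + M))) := by
      intro ij
      have : ∀ y ∈ antidiagonalTuple (M+1) ij.2,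
          ∏ j, ((Fin.cons ij.1 y : Fin (M+2) → ℕ) j + s j).choose (c j + s j)
            = (ij.1 + s 0).choose (c 0 + s 0) *
              ∏ j : Fin (M+1), (y j + s j.succ).choose (c j.succ + s j.succ) := by
        intro y _
        rw [Fin.prod_univ_succ]
        simp only [Fin.cons_zero, Fin.cons_succ]
      rw [Finset.sum_congr rfl this, ← Finset.mul_sum,
        ih ij.2 (fun j => s j.succ) (fun j => c j.succ)]
      congr 2
      · omega
      · omega
    rw [Finset.sum_congr rfl fun ij _ => inner ij]
    rw [L2 n (s 0) (c 0) ((∑ j : Fin (M+1), s j.succ) + M) (∑ j : Fin (M+1), c j.succ)]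
    rw [Fin.sum_univ_succ s, Fin.sum_univ_succ c]
    congr 1
    · omega
    · omega


/-- trinomial revision, truncation-safe -/
lemma PW1 (r b t : ℕ) :
    r.choose (b + t) * (b + t).choose b = r.choose b * (r - b).choose t := by
  rcases le_or_gt (b + t) r with h | h
  · have := Nat.choose_mul (n := r) (k := b + t) (s := b) (Nat.le_add_right _ _)
    rw [this, Nat.add_sub_cancel_left]
  · rw [Nat.choose_eq_zero_of_lt h, Nat.zero_mul]
    rcases le_or_gt b r with hb | hb
    · rw [Nat.choose_eq_zero_of_lt (by omega : r - b < t), Nat.mul_zero]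
    · rw [Nat.choose_eq_zero_of_lt hb, Nat.zero_mul]

/-- `C(b+t,b)·C(b,t) = C(b+t,2t)·C(2t,t)` -/
lemma PW2 (b t : ℕ) :
    (b + t).choose b * b.choose t = (b + t).choose (t + t) * (t + t).choose t := by
  rcases le_or_gt t b with h | h
  · have h1 : (b + t).choose b = (b + t).choose t := by
      have := Nat.choose_symm (Nat.le_add_left t b)
      rwa [show b + t - t = b by omega] at this
    have h2 := Nat.choose_mul (n := b + t) (k := t + t) (s := t) (by omega)
    rw [show b + t - t = b by omega, show t + t - t = t by omega] at h2
    rw [h1, h2]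
  · rw [Nat.choose_eq_zero_of_lt h, Nat.mul_zero,
      Nat.choose_eq_zero_of_lt (by omega : b + t < t + t), Nat.zero_mul]

/-- self Vandermonde: `Σ_t C(b,t)C(x,t) = C(x+b,b)` -/
lemma VdS (x b : ℕ) :
    ∑ t ∈ range (b + 1), b.choose t * x.choose t = (x + b).choose b := by
  rw [Nat.add_choose_eq, sum_antidiagonal_eq_sum_range_succ_mk]
  apply Finset.sum_congr rfl
  intro t ht
  have htb := Finset.mem_range.mp ht
  rw [Nat.mul_comm]
  congr 1
  exact (Nat.choose_symm (by omega : t ≤ b)).symm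

/-- square expansion with extended range -/
lemma A1ext (r b K : ℕ) (hbK : b ≤ K) :
    r.choose b ^ 2 = ∑ t ∈ range (K + 1), r.choose (b + t) * (b + t).choose b * b.choose t := by
  have step : ∀ t, r.choose (b + t) * (b + t).choose b * b.choose t
      = r.choose b * ((r - b).choose t * b.choose t) := by
    intro t
    rw [PW1]
    ring
  rw [Finset.sum_congr rfl fun t _ => step t, ← Finset.mul_sum]
  have hshrink : ∑ t ∈ range (K + 1), (r - b).choose t * b.choose t
      = ∑ t ∈ range (b + 1), (r - b).choose t * b.choose t := by
    symm
    apply Finset.sum_subset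
    · intro t ht
      simp only [Finset.mem_range] at *
      omega
    · intro t _ ht
      simp only [Finset.mem_range] at ht
      rw [Nat.choose_eq_zero_of_lt (by omega : b < t), Nat.mul_zero]
  rw [hshrink]
  have : ∑ t ∈ range (b + 1), (r - b).choose t * b.choose t
      = ∑ t ∈ range (b + 1), b.choose t * (r - b).choose t :=
    Finset.sum_congr rfl fun t _ => Nat.mul_comm _ _
  rw [this, VdS]
  rcases le_or_gt b r with h | h
  · rw [Nat.sub_add_cancel h, Nat.pow_two]
  · rw [Nat.choose_eq_zero_of_lt h]
    simp


/-- `D m t = Σ_{τ ∈ Φ_m^t} Π_j C(2τ_j, τ_j)`, the coefficients of `(1-4x)^{-m/2}`. -/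
def D (m t : ℕ) : ℕ := ∑ τ ∈ antidiagonalTuple m t, ∏ j, Nat.centralBinom (τ j)

lemma D_zero_right (m : ℕ) : D m 0 = 1 := by
  rw [D, antidiagonalTuple_zero_right, Finset.sum_singleton]
  simp

lemma D_zero_left (t : ℕ) : D 0 (t + 1) = 0 := by
  rw [D, antidiagonalTuple_zero_succ, Finset.sum_empty]

lemma D_succ (m t : ℕ) :
    D (m + 1) t = ∑ ij ∈ antidiagonal t, Nat.centralBinom ij.1 * D m ij.2 := by
  rw [D, sum_adT_succ]
  refine Finset.sum_congr rfl fun ij _ => ?_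
  rw [D, Finset.mul_sum]
  refine Finset.sum_congr rfl fun y _ => ?_
  rw [Fin.prod_univ_succ]
  simp only [Fin.cons_zero, Fin.cons_succ]

lemma D_one (t : ℕ) : D 1 t = Nat.centralBinom t := by
  rw [D, antidiagonalTuple_one, Finset.sum_singleton, Fin.prod_univ_one]
  simp

/-- weighted symmetry for the central binomial convolution -/
lemma sym_weight (N : ℕ) :
    2 * ∑ ij ∈ antidiagonal N, ij.1 * (Nat.centralBinom ij.1 * Nat.centralBinom ij.2)
      = N * ∑ ij ∈ antidiagonal N, Nat.centralBinom ij.1 * Nat.centralBinom ij.2 := by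
  have hswap : ∑ ij ∈ antidiagonal N, ij.2 * (Nat.centralBinom ij.1 * Nat.centralBinom ij.2)
      = ∑ ij ∈ antidiagonal N, ij.1 * (Nat.centralBinom ij.1 * Nat.centralBinom ij.2) := by
    rw [← Finset.Nat.sum_antidiagonal_swap
      (f := fun p => p.1 * (Nat.centralBinom p.1 * Nat.centralBinom p.2))]
    refine Finset.sum_congr rfl fun p _ => ?_
    simp only [Prod.fst_swap, Prod.snd_swap]
    ring
  calc 2 * ∑ ij ∈ antidiagonal N, ij.1 * (Nat.centralBinom ij.1 * Nat.centralBinom ij.2)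
      = (∑ ij ∈ antidiagonal N, ij.1 * (Nat.centralBinom ij.1 * Nat.centralBinom ij.2))
        + ∑ ij ∈ antidiagonal N, ij.2 * (Nat.centralBinom ij.1 * Nat.centralBinom ij.2) := by
        rw [hswap]; ring
    _ = ∑ ij ∈ antidiagonal N,
          (ij.1 + ij.2) * (Nat.centralBinom ij.1 * Nat.centralBinom ij.2) := by
        rw [← Finset.sum_add_distrib]
        exact Finset.sum_congr rfl fun ij _ => by ring
    _ = ∑ ij ∈ antidiagonal N, N * (Nat.centralBinom ij.1 * Nat.centralBinom ij.2) := by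
        refine Finset.sum_congr rfl fun ij hij => ?_
        rw [Finset.HasAntidiagonal.mem_antidiagonal.mp hij]
    _ = N * ∑ ij ∈ antidiagonal N, Nat.centralBinom ij.1 * Nat.centralBinom ij.2 :=
        (Finset.mul_sum _ _ _).symm

/-- `Σ_{i+j=n} C(2i,i)C(2j,j) = 4^n` -/
lemma CB2 (n : ℕ) :
    ∑ ij ∈ antidiagonal n, Nat.centralBinom ij.1 * Nat.centralBinom ij.2 = 4 ^ n := by
  induction n with
  | zero => simp
  | succ n ih =>
    -- abbreviations
    set S := ∑ ij ∈ antidiagonal (n+1), Nat.centralBinom ij.1 * Nat.centralBinom ij.2 with hS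
    have peel : ∑ ij ∈ antidiagonal (n+1), ij.1 * (Nat.centralBinom ij.1 * Nat.centralBinom ij.2)
        = 2 * ∑ ij ∈ antidiagonal n,
            (2 * ij.1 + 1) * (Nat.centralBinom ij.1 * Nat.centralBinom ij.2) := by
      rw [Finset.Nat.sum_antidiagonal_succ
        (f := fun p => p.1 * (Nat.centralBinom p.1 * Nat.centralBinom p.2))]
      simp only [Nat.zero_mul, Nat.zero_add]
      rw [Finset.mul_sum]
      refine Finset.sum_congr rfl fun ij _ => ?_
      have h := Nat.succ_mul_centralBinom_succ ij.1
      calc (ij.1 + 1) * (Nat.centralBinom (ij.1 + 1) * Nat.centralBinom ij.2)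
          = ((ij.1 + 1) * Nat.centralBinom (ij.1 + 1)) * Nat.centralBinom ij.2 := by ring
        _ = (2 * (2 * ij.1 + 1) * Nat.centralBinom ij.1) * Nat.centralBinom ij.2 := by rw [h]
        _ = 2 * ((2 * ij.1 + 1) * (Nat.centralBinom ij.1 * Nat.centralBinom ij.2)) := by ring
    have expand : ∑ ij ∈ antidiagonal n,
        (2 * ij.1 + 1) * (Nat.centralBinom ij.1 * Nat.centralBinom ij.2)
        = 2 * (∑ ij ∈ antidiagonal n, ij.1 * (Nat.centralBinom ij.1 * Nat.centralBinom ij.2))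
          + 4 ^ n := by
      rw [← ih, Finset.mul_sum, ← Finset.sum_add_distrib]
      exact Finset.sum_congr rfl fun ij _ => by ring
    have h2 : 2 * ∑ ij ∈ antidiagonal n,
        ij.1 * (Nat.centralBinom ij.1 * Nat.centralBinom ij.2) = n * 4 ^ n := by
      rw [sym_weight, ih]
    have key : 2 * ((n + 1) * S) = 2 * ((n + 1) * 4 ^ (n + 1)) := by
      have hw := sym_weight (n + 1)
      rw [← hS] at hw
      calc 2 * ((n + 1) * S)
          = 2 * (2 * ∑ ij ∈ antidiagonal (n+1),
              ij.1 * (Nat.centralBinom ij.1 * Nat.centralBinom ij.2)) := by rw [hw]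
        _ = 4 * ∑ ij ∈ antidiagonal (n+1),
              ij.1 * (Nat.centralBinom ij.1 * Nat.centralBinom ij.2) := by ring
        _ = 8 * ∑ ij ∈ antidiagonal n,
              (2 * ij.1 + 1) * (Nat.centralBinom ij.1 * Nat.centralBinom ij.2) := by
            rw [peel]; ring
        _ = 8 * (2 * (∑ ij ∈ antidiagonal n,
              ij.1 * (Nat.centralBinom ij.1 * Nat.centralBinom ij.2)) + 4 ^ n) := by
            rw [expand]
        _ = 4 * (2 * (2 * ∑ ij ∈ antidiagonal n,
              ij.1 * (Nat.centralBinom ij.1 * Nat.centralBinom ij.2))) + 8 * 4 ^ n := by ring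
        _ = 4 * (2 * (n * 4 ^ n)) + 8 * 4 ^ n := by rw [h2]
        _ = 2 * ((n + 1) * 4 ^ (n + 1)) := by ring
    have := Nat.eq_of_mul_eq_mul_left (by omega : 0 < 2 * (n + 1)) (by
      calc 2 * (n + 1) * S = 2 * ((n + 1) * S) := by ring
        _ = 2 * ((n + 1) * 4 ^ (n + 1)) := key
        _ = 2 * (n + 1) * 4 ^ (n + 1) := by ring)
    exact this

lemma D_two (t : ℕ) : D 2 t = 4 ^ t := by
  rw [D_succ]
  calc ∑ ij ∈ antidiagonal t, Nat.centralBinom ij.1 * D 1 ij.2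
      = ∑ ij ∈ antidiagonal t, Nat.centralBinom ij.1 * Nat.centralBinom ij.2 :=
        Finset.sum_congr rfl fun ij _ => by rw [D_one]
    _ = 4 ^ t := CB2 t

/-- `Σ_{i+j=n} C(2i,i)·4^j = (2n+1)·C(2n,n)` -/
lemma CB3 (n : ℕ) :
    ∑ ij ∈ antidiagonal n, Nat.centralBinom ij.1 * 4 ^ ij.2
      = (2 * n + 1) * Nat.centralBinom n := by
  induction n with
  | zero => simp
  | succ n ih =>
    rw [Finset.Nat.sum_antidiagonal_succ' (f := fun p => Nat.centralBinom p.1 * 4 ^ p.2)]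
    have step : ∑ ij ∈ antidiagonal n, Nat.centralBinom ij.1 * 4 ^ (ij.2 + 1)
        = 4 * ((2 * n + 1) * Nat.centralBinom n) := by
      rw [← ih, Finset.mul_sum]
      exact Finset.sum_congr rfl fun ij _ => by ring
    simp only [pow_zero, Nat.mul_one]
    rw [step]
    have h := Nat.succ_mul_centralBinom_succ n
    calc Nat.centralBinom (n + 1) + 4 * ((2 * n + 1) * Nat.centralBinom n)
        = Nat.centralBinom (n + 1) + 2 * ((n + 1) * Nat.centralBinom (n + 1)) := by
          rw [h]; ring
      _ = (2 * (n + 1) + 1) * Nat.centralBinom (n + 1) := by ring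

/-- `Σ_{i+j=t} C(2i,i)·D 2 j = (2t+1)·C(2t,t)` -/
lemma CB2D (t : ℕ) :
    ∑ ij ∈ antidiagonal t, Nat.centralBinom ij.1 * D 2 ij.2
      = (2 * t + 1) * Nat.centralBinom t := by
  rw [← CB3]
  exact Finset.sum_congr rfl fun ij _ => by rw [D_two]


/-- triangle sum swap -/
lemma TRI {M : Type*} [AddCommMonoid M] (n : ℕ) (g : ℕ → ℕ → M) :
    ∑ a ∈ range (n + 1), ∑ c ∈ range (n + 1 - a), g a c
      = ∑ c ∈ range (n + 1), ∑ a ∈ range (n + 1 - c), g a c := by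
  have conv1 : ∀ (h : ℕ → ℕ → M) (a : ℕ), a ∈ range (n + 1) →
      ∑ c ∈ range (n + 1 - a), h a c
        = ∑ c ∈ range (n + 1), if a + c ≤ n then h a c else 0 := by
    intro h a _
    rw [← Finset.sum_filter]
    apply Finset.sum_congr _ fun _ _ => rfl
    ext c
    simp only [Finset.mem_filter, Finset.mem_range]
    omega
  rw [Finset.sum_congr rfl (conv1 g), Finset.sum_comm,
    Finset.sum_congr rfl (conv1 (fun c a => g a c))]
  apply Finset.sum_congr rfl
  intro c _
  apply Finset.sum_congr rfl
  intro a _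
  rw [Nat.add_comm c a]

/-- nested antidiagonal swap: summing over `i + p + q = n` -/
lemma ad3 {M : Type*} [AddCommMonoid M] (n : ℕ) (f : ℕ → ℕ → ℕ → M) :
    ∑ x ∈ antidiagonal n, ∑ y ∈ antidiagonal x.2, f x.1 y.1 y.2
      = ∑ x ∈ antidiagonal n, ∑ y ∈ antidiagonal x.2, f y.1 x.1 y.2 := by
  rw [sum_antidiagonal_eq_sum_range_succ_mk, sum_antidiagonal_eq_sum_range_succ_mk]
  have lhs_eq : ∀ a ∈ range (n + 1),
      ∑ y ∈ antidiagonal (n - a), f a y.1 y.2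
        = ∑ c ∈ range (n + 1 - a), f a c (n - a - c) := by
    intro a ha
    rw [sum_antidiagonal_eq_sum_range_succ_mk]
    apply Finset.sum_congr _ fun _ _ => rfl
    congr 1
    have := Finset.mem_range.mp ha
    omega
  have rhs_eq : ∀ c ∈ range (n + 1),
      ∑ y ∈ antidiagonal (n - c), f y.1 c y.2
        = ∑ a ∈ range (n + 1 - c), f a c (n - a - c) := by
    intro c hc
    rw [sum_antidiagonal_eq_sum_range_succ_mk]
    have hb : n - c + 1 = n + 1 - c := by
      have := Finset.mem_range.mp hc
      omega
    rw [← hb]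
    apply Finset.sum_congr rfl
    intro a _
    congr 1
    omega
  rw [Finset.sum_congr rfl lhs_eq, Finset.sum_congr rfl rhs_eq]
  exact TRI n fun a c => f a c (n - a - c)

/-- contiguity auxiliary: `Σ (2i+1)·cb i·D m j = Σ cb i·D (m+2) j` over `i+j=t` -/
lemma ID2 (m : ℕ) : ∀ t : ℕ,
    ∑ ij ∈ antidiagonal t, (2 * ij.1 + 1) * Nat.centralBinom ij.1 * D m ij.2
      = ∑ ij ∈ antidiagonal t, Nat.centralBinom ij.1 * D (m + 2) ij.2 := by
  induction m with
  | zero =>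
    intro t
    have lhs_eq : ∑ ij ∈ antidiagonal t, (2 * ij.1 + 1) * Nat.centralBinom ij.1 * D 0 ij.2
        = (2 * t + 1) * Nat.centralBinom t := by
      rw [Finset.sum_eq_single (t, 0)]
      · rw [D_zero_right, Nat.mul_one]
      · intro ij hij hne
        have hmem := Finset.HasAntidiagonal.mem_antidiagonal.mp hij
        have : ij.2 ≠ 0 := by
          intro h0
          apply hne
          have : ij.1 = t := by omega
          exact Prod.ext this h0
        obtain ⟨j, hj⟩ := Nat.exists_eq_succ_of_ne_zero this
        rw [hj, D_zero_left, Nat.mul_zero]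
      · intro h
        exact absurd (Finset.HasAntidiagonal.mem_antidiagonal.mpr (by omega)) h
    rw [lhs_eq]
    exact (CB2D t).symm
  | succ m ih =>
    intro t
    have lhs_eq : ∑ ij ∈ antidiagonal t, (2 * ij.1 + 1) * Nat.centralBinom ij.1 * D (m + 1) ij.2
        = ∑ x ∈ antidiagonal t, ∑ y ∈ antidiagonal x.2,
            (2 * x.1 + 1) * Nat.centralBinom x.1 * (Nat.centralBinom y.1 * D m y.2) := by
      refine Finset.sum_congr rfl fun ij _ => ?_
      rw [D_succ, Finset.mul_sum]
    have rhs_eq : ∑ ij ∈ antidiagonal t, Nat.centralBinom ij.1 * D (m + 3) ij.2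
        = ∑ x ∈ antidiagonal t, ∑ y ∈ antidiagonal x.2,
            Nat.centralBinom x.1 * (Nat.centralBinom y.1 * D (m + 2) y.2) := by
      refine Finset.sum_congr rfl fun ij _ => ?_
      rw [show m + 3 = (m + 2) + 1 by omega, D_succ, Finset.mul_sum]
    rw [lhs_eq, rhs_eq]
    rw [ad3 t (fun i p q => (2 * i + 1) * Nat.centralBinom i * (Nat.centralBinom p * D m q))]
    rw [ad3 t (fun i p q => Nat.centralBinom i * (Nat.centralBinom p * D (m + 2) q))]
    refine Finset.sum_congr rfl fun x _ => ?_
    -- now inner sums over y ∈ antidiagonal x.2 with x.1 as the passive index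
    have inner : ∑ y ∈ antidiagonal x.2,
        (2 * y.1 + 1) * Nat.centralBinom y.1 * (Nat.centralBinom x.1 * D m y.2)
          = ∑ y ∈ antidiagonal x.2,
            Nat.centralBinom y.1 * (Nat.centralBinom x.1 * D (m + 2) y.2) := by
      have l1 : ∑ y ∈ antidiagonal x.2,
          (2 * y.1 + 1) * Nat.centralBinom y.1 * (Nat.centralBinom x.1 * D m y.2)
            = Nat.centralBinom x.1 * ∑ y ∈ antidiagonal x.2,
              (2 * y.1 + 1) * Nat.centralBinom y.1 * D m y.2 := by
        rw [Finset.mul_sum]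
        exact Finset.sum_congr rfl fun y _ => by ring
      have l2 : ∑ y ∈ antidiagonal x.2,
          Nat.centralBinom y.1 * (Nat.centralBinom x.1 * D (m + 2) y.2)
            = Nat.centralBinom x.1 * ∑ y ∈ antidiagonal x.2,
              Nat.centralBinom y.1 * D (m + 2) y.2 := by
        rw [Finset.mul_sum]
        exact Finset.sum_congr rfl fun y _ => by ring
      rw [l1, l2, ih x.2]
    exact inner

/-- key derivative recurrence: `(t+1)·D m (t+1) = 2m·D (m+2) t` -/
lemma DREC (m : ℕ) : ∀ t : ℕ, (t + 1) * D m (t + 1) = 2 * m * D (m + 2) t := by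
  induction m with
  | zero =>
    intro t
    simp [D_zero_left]
  | succ m ih =>
    intro t
    rw [D_succ m (t + 1), Finset.mul_sum]
    have split : ∀ ij ∈ antidiagonal (t + 1),
        (t + 1) * (Nat.centralBinom ij.1 * D m ij.2)
          = ij.1 * (Nat.centralBinom ij.1 * D m ij.2)
            + Nat.centralBinom ij.1 * (ij.2 * D m ij.2) := by
      intro ij hij
      have := Finset.HasAntidiagonal.mem_antidiagonal.mp hij
      calc (t + 1) * (Nat.centralBinom ij.1 * D m ij.2)
          = (ij.1 + ij.2) * (Nat.centralBinom ij.1 * D m ij.2) := by rw [this]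
        _ = _ := by ring
    rw [Finset.sum_congr rfl split, Finset.sum_add_distrib]
    have first : ∑ ij ∈ antidiagonal (t + 1), ij.1 * (Nat.centralBinom ij.1 * D m ij.2)
        = 2 * ∑ ij ∈ antidiagonal t,
            (2 * ij.1 + 1) * Nat.centralBinom ij.1 * D m ij.2 := by
      rw [Finset.Nat.sum_antidiagonal_succ
        (f := fun p => p.1 * (Nat.centralBinom p.1 * D m p.2))]
      simp only [Nat.zero_mul, Nat.zero_add]
      rw [Finset.mul_sum]
      refine Finset.sum_congr rfl fun ij _ => ?_
      have h := Nat.succ_mul_centralBinom_succ ij.1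
      calc (ij.1 + 1) * (Nat.centralBinom (ij.1 + 1) * D m ij.2)
          = ((ij.1 + 1) * Nat.centralBinom (ij.1 + 1)) * D m ij.2 := by ring
        _ = (2 * (2 * ij.1 + 1) * Nat.centralBinom ij.1) * D m ij.2 := by rw [h]
        _ = 2 * ((2 * ij.1 + 1) * Nat.centralBinom ij.1 * D m ij.2) := by ring
    have second : ∑ ij ∈ antidiagonal (t + 1), Nat.centralBinom ij.1 * (ij.2 * D m ij.2)
        = 2 * m * ∑ ij ∈ antidiagonal t, Nat.centralBinom ij.1 * D (m + 2) ij.2 := by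
      rw [Finset.Nat.sum_antidiagonal_succ'
        (f := fun p => Nat.centralBinom p.1 * (p.2 * D m p.2))]
      simp only [Nat.zero_mul, Nat.mul_zero, Nat.zero_add]
      rw [Finset.mul_sum]
      refine Finset.sum_congr rfl fun ij _ => ?_
      rw [ih ij.2]
      ring
    rw [first, second, ID2 m t]
    rw [show m + 1 + 2 = (m + 2) + 1 by omega, D_succ (m + 2) t, Finset.mul_sum]
    rw [Finset.mul_sum, ← Finset.sum_add_distrib, Finset.mul_sum]
    refine Finset.sum_congr rfl fun ij _ => ?_
    ring


/-- the reduced single sum (with `m = μ+1`) -/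
def S (a k μ : ℕ) : ℕ :=
  ∑ t ∈ range (k + 1),
    (a + k + μ).choose (k + t + μ) * (k + t + μ).choose (t + t + μ) * D (μ + 1) t

/-- the contiguous recurrence in `a` -/
lemma R1 (a k' μ : ℕ) :
    (a + 1) * S (a + 1) (k' + 1) μ
      = (a + k' + μ + 2) * S a (k' + 1) μ + (2 * (μ + 1)) * S a k' (μ + 2) := by
  rw [S, S, S, Finset.mul_sum, Finset.mul_sum, Finset.mul_sum]
  have main : ∀ t ∈ range (k' + 2),
      (a + 1) * ((a + 1 + (k' + 1) + μ).choose (k' + 1 + t + μ)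
          * (k' + 1 + t + μ).choose (t + t + μ) * D (μ + 1) t)
        = (a + k' + μ + 2) * ((a + (k' + 1) + μ).choose (k' + 1 + t + μ)
            * (k' + 1 + t + μ).choose (t + t + μ) * D (μ + 1) t)
          + (if t = 0 then 0 else
              (2 * (μ + 1)) * ((a + k' + (μ + 2)).choose (k' + (t - 1) + (μ + 2))
                * (k' + (t - 1) + (μ + 2)).choose ((t - 1) + (t - 1) + (μ + 2))
                * D (μ + 2 + 1) (t - 1))) := by
    intro t _
    have hmse := Nat.choose_mul_succ_eq (a + k' + μ + 1) (k' + 1 + t + μ)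
    cases t with
    | zero =>
      rw [if_pos rfl, Nat.add_zero]
      have h1 : a + k' + μ + 1 + 1 = a + k' + μ + 2 := by omega
      have h2 : a + k' + μ + 1 + 1 - (k' + 1 + 0 + μ) = a + 1 := by omega
      rw [h1, h2] at hmse
      have e1 : a + 1 + (k' + 1) + μ = a + k' + μ + 2 := by omega
      have e2 : a + (k' + 1) + μ = a + k' + μ + 1 := by omega
      rw [e1, e2]
      calc (a + 1) * ((a + k' + μ + 2).choose (k' + 1 + 0 + μ)
              * (k' + 1 + 0 + μ).choose (0 + 0 + μ) * D (μ + 1) 0)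
          = ((a + k' + μ + 2).choose (k' + 1 + 0 + μ) * (a + 1))
              * ((k' + 1 + 0 + μ).choose (0 + 0 + μ) * D (μ + 1) 0) := by ring
        _ = ((a + k' + μ + 1).choose (k' + 1 + 0 + μ) * (a + k' + μ + 2))
              * ((k' + 1 + 0 + μ).choose (0 + 0 + μ) * D (μ + 1) 0) := by rw [← hmse]
        _ = (a + k' + μ + 2) * ((a + k' + μ + 1).choose (k' + 1 + 0 + μ)
              * (k' + 1 + 0 + μ).choose (0 + 0 + μ) * D (μ + 1) 0) := by ring
    | succ t' =>
      rw [if_neg (Nat.succ_ne_zero t'), Nat.add_sub_cancel]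
      have h1 : a + k' + μ + 1 + 1 = a + k' + μ + 2 := by omega
      rw [h1] at hmse
      have hD := DREC (μ + 1) t'
      have e1 : a + 1 + (k' + 1) + μ = a + k' + μ + 2 := by omega
      have e2 : a + (k' + 1) + μ = a + k' + μ + 1 := by omega
      have e3 : k' + 1 + (t' + 1) + μ = k' + t' + (μ + 2) := by omega
      have e4 : (t' + 1) + (t' + 1) + μ = t' + t' + (μ + 2) := by omega
      have e5 : μ + 1 + 2 = μ + 2 + 1 := by omega
      have e6 : a + k' + (μ + 2) = a + k' + μ + 2 := by omega
      rw [e1, e2, e3, e4, e5, e6]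
      rw [e3] at hmse
      rcases le_or_gt t' a with hta | hta
      · have h2 : a + k' + μ + 2 - (k' + t' + (μ + 2)) = a - t' := by omega
        rw [h2] at hmse
        calc (a + 1) * ((a + k' + μ + 2).choose (k' + t' + (μ + 2))
                * (k' + t' + (μ + 2)).choose (t' + t' + (μ + 2)) * D (μ + 1) (t' + 1))
            = ((a - t') + (t' + 1)) * ((a + k' + μ + 2).choose (k' + t' + (μ + 2))
                * (k' + t' + (μ + 2)).choose (t' + t' + (μ + 2)) * D (μ + 1) (t' + 1)) := by
              congr 1
              omega
          _ = ((a + k' + μ + 2).choose (k' + t' + (μ + 2)) * (a - t'))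
                * ((k' + t' + (μ + 2)).choose (t' + t' + (μ + 2)) * D (μ + 1) (t' + 1))
              + ((a + k' + μ + 2).choose (k' + t' + (μ + 2))
                * (k' + t' + (μ + 2)).choose (t' + t' + (μ + 2)))
                * ((t' + 1) * D (μ + 1) (t' + 1)) := by ring
          _ = ((a + k' + μ + 1).choose (k' + t' + (μ + 2)) * (a + k' + μ + 2))
                * ((k' + t' + (μ + 2)).choose (t' + t' + (μ + 2)) * D (μ + 1) (t' + 1))
              + ((a + k' + μ + 2).choose (k' + t' + (μ + 2))
                * (k' + t' + (μ + 2)).choose (t' + t' + (μ + 2)))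
                * (2 * (μ + 1) * D (μ + 1 + 2) t') := by rw [← hmse, hD]
          _ = (a + k' + μ + 2) * ((a + k' + μ + 1).choose (k' + t' + (μ + 2))
                * (k' + t' + (μ + 2)).choose (t' + t' + (μ + 2)) * D (μ + 1) (t' + 1))
              + 2 * (μ + 1) * ((a + k' + μ + 2).choose (k' + t' + (μ + 2))
                * (k' + t' + (μ + 2)).choose (t' + t' + (μ + 2)) * D (μ + 1 + 2) t') := by ring
          _ = _ := by rw [e5]
      · have z1 : (a + k' + μ + 2).choose (k' + t' + (μ + 2)) = 0 :=
          Nat.choose_eq_zero_of_lt (by omega)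
        have z2 : (a + k' + μ + 1).choose (k' + t' + (μ + 2)) = 0 :=
          Nat.choose_eq_zero_of_lt (by omega)
        rw [z1, z2]
        ring
  rw [Finset.sum_congr rfl main, Finset.sum_add_distrib]
  congr 1
  rw [Finset.sum_range_succ']
  simp only [if_neg (Nat.succ_ne_zero _), Nat.add_sub_cancel, if_true, Nat.add_zero]


/-- arithmetic fact: `(k'+1)(k'+μ+2)·C(k'+μ+1,k'+1) = (μ+1)(μ+2)·C(k'+μ+2,k')` -/
lemma fact3 (k' μ : ℕ) :
    (k' + 1) * ((k' + μ + 2) * (k' + μ + 1).choose (k' + 1))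
      = (μ + 1) * ((μ + 2) * (k' + μ + 2).choose k') := by
  have s1 : (k' + μ + 1).choose (k' + 1) = (k' + μ + 1).choose μ := by
    have := Nat.choose_symm (show μ ≤ k' + μ + 1 by omega)
    rwa [show k' + μ + 1 - μ = k' + 1 by omega] at this
  have s2 : (k' + μ + 2).choose k' = (k' + μ + 2).choose (μ + 2) := by
    have := Nat.choose_symm (show μ + 2 ≤ k' + μ + 2 by omega)
    rwa [show k' + μ + 2 - (μ + 2) = k' by omega] at this
  rw [s1, s2]
  have h1 := Nat.add_one_mul_choose_eq (k' + μ + 1) μ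
  have h2 := Nat.choose_succ_right_eq (k' + μ + 2) (μ + 1)
  rw [show k' + μ + 2 - (μ + 1) = k' + 1 by omega] at h2
  simp -failIfUnchanged only [Nat.succ_eq_add_one] at h1
  calc (k' + 1) * ((k' + μ + 2) * (k' + μ + 1).choose μ)
      = (k' + 1) * ((k' + μ + 1 + 1) * (k' + μ + 1).choose μ) := by ring_nf
    _ = (k' + 1) * ((k' + μ + 2).choose (μ + 1) * (μ + 1)) := by rw [h1]
    _ = (μ + 1) * ((k' + μ + 2).choose (μ + 1) * (k' + 1)) := by ring
    _ = (μ + 1) * ((k' + μ + 2).choose (μ + 2) * (μ + 2)) := by rw [← h2]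
    _ = (μ + 1) * ((μ + 2) * (k' + μ + 2).choose (μ + 2)) := by ring

/-- arithmetic core of the induction step -/
lemma CORE (a k' μ : ℕ) :
    (a + 1) * ((a + k' + μ + 2).choose (a + 1) * ((k' + μ + 1).choose (k' + 1)
        * (2 * a + 2 * k' + μ + 4)))
      = (a + k' + μ + 2) * ((2 * a + μ + 2) * ((a + k' + μ + 1).choose a
          * (k' + μ + 1).choose (k' + 1)))
        + 2 * ((μ + 1) * ((μ + 2) * ((a + k' + μ + 2).choose a
            * (k' + μ + 2).choose k'))) := by
  have hi : (a + k' + μ + 2).choose (a + 1) * (a + 1)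
      = (a + k' + μ + 2).choose a * (k' + μ + 2) := by
    have := Nat.choose_succ_right_eq (a + k' + μ + 2) a
    rwa [show a + k' + μ + 2 - a = k' + μ + 2 by omega] at this
  have hii : (a + k' + μ + 1).choose a * (a + k' + μ + 2)
      = (a + k' + μ + 2).choose a * (k' + μ + 2) := by
    have := Nat.choose_mul_succ_eq (a + k' + μ + 1) a
    rwa [show a + k' + μ + 1 + 1 = a + k' + μ + 2 by omega,
      show a + k' + μ + 2 - a = k' + μ + 2 by omega] at this
  have h3 := fact3 k' μ
  calc (a + 1) * ((a + k' + μ + 2).choose (a + 1) * ((k' + μ + 1).choose (k' + 1)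
        * (2 * a + 2 * k' + μ + 4)))
      = ((a + k' + μ + 2).choose (a + 1) * (a + 1)) * ((k' + μ + 1).choose (k' + 1)
          * (2 * a + 2 * k' + μ + 4)) := by ring
    _ = ((a + k' + μ + 2).choose a * (k' + μ + 2)) * ((k' + μ + 1).choose (k' + 1)
          * (2 * a + 2 * k' + μ + 4)) := by rw [hi]
    _ = ((a + k' + μ + 2).choose a * (k' + μ + 2)) * ((k' + μ + 1).choose (k' + 1)
          * (2 * a + μ + 2))
        + 2 * ((a + k' + μ + 2).choose a
            * ((k' + 1) * ((k' + μ + 2) * (k' + μ + 1).choose (k' + 1)))) := by ring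
    _ = ((a + k' + μ + 2).choose a * (k' + μ + 2)) * ((k' + μ + 1).choose (k' + 1)
          * (2 * a + μ + 2))
        + 2 * ((a + k' + μ + 2).choose a
            * ((μ + 1) * ((μ + 2) * (k' + μ + 2).choose k'))) := by rw [h3]
    _ = ((a + k' + μ + 1).choose a * (a + k' + μ + 2)) * ((k' + μ + 1).choose (k' + 1)
          * (2 * a + μ + 2))
        + 2 * ((a + k' + μ + 2).choose a
            * ((μ + 1) * ((μ + 2) * (k' + μ + 2).choose k'))) := by rw [hii]
    _ = _ := by ring

/-- the closed form for `S` -/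
lemma KL (a : ℕ) : ∀ k μ : ℕ,
    (∏ i ∈ range k, (μ + 2 + 2 * i)) * S a k μ
      = (a + k + μ).choose a * ((k + μ).choose k
          * ∏ i ∈ range k, (2 * a + μ + 2 + 2 * i)) := by
  induction a with
  | zero =>
    intro k μ
    have hS : S 0 k μ = (k + μ).choose k := by
      rw [S]
      rw [Finset.sum_eq_single_of_mem 0 (by simp) (fun t _ ht => by
        rw [Nat.choose_eq_zero_of_lt (show 0 + k + μ < k + t + μ by omega), Nat.zero_mul,
          Nat.zero_mul])]
      rw [D_zero_right, Nat.mul_one,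
        show 0 + k + μ = k + 0 + μ by omega, Nat.choose_self, Nat.one_mul,
        show k + 0 + μ = k + μ by omega, show 0 + 0 + μ = μ by omega]
      have := Nat.choose_symm (show k ≤ k + μ by omega)
      rwa [show k + μ - k = μ by omega] at this
    rw [hS, show 0 + k + μ = k + μ by omega, Nat.choose_zero_right, Nat.one_mul]
    rw [Finset.prod_congr rfl (fun i _ => show 2 * 0 + μ + 2 + 2 * i = μ + 2 + 2 * i by omega)]
    ring
  | succ a ih =>
    intro k μ
    cases k with
    | zero =>
      simp only [Finset.range_zero, Finset.prod_empty, Nat.one_mul, Nat.mul_one]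
      rw [S, Finset.sum_range_one, D_zero_right, Nat.mul_one,
        show 0 + 0 + μ = μ by omega, Nat.choose_self, Nat.mul_one,
        show a + 1 + 0 + μ = a + 1 + μ by omega,
        Nat.choose_zero_right, Nat.mul_one]
      have := Nat.choose_symm (show a + 1 ≤ a + 1 + μ by omega)
      rwa [show a + 1 + μ - (a + 1) = μ by omega] at this
    | succ k' =>
      apply Nat.eq_of_mul_eq_mul_left (Nat.succ_pos a)
      have Pfact : ∏ i ∈ range (k' + 1), (μ + 2 + 2 * i)
          = (μ + 2) * ∏ i ∈ range k', (μ + 2 + 2 + 2 * i) := by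
        rw [Finset.prod_range_succ']
        rw [Finset.prod_congr rfl
          (fun i _ => show μ + 2 + 2 * (i + 1) = μ + 2 + 2 + 2 * i by omega)]
        rw [show μ + 2 + 2 * 0 = μ + 2 by omega]
        ring
      have Qfact1 : ∏ i ∈ range (k' + 1), (2 * a + μ + 2 + 2 * i)
          = (2 * a + μ + 2) * ∏ i ∈ range k', (2 * a + (μ + 2) + 2 + 2 * i) := by
        rw [Finset.prod_range_succ']
        rw [Finset.prod_congr rfl
          (fun i _ => show 2 * a + μ + 2 + 2 * (i + 1) = 2 * a + (μ + 2) + 2 + 2 * i by omega)]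
        rw [show 2 * a + μ + 2 + 2 * 0 = 2 * a + μ + 2 by omega]
        ring
      have Qfact2 : ∏ i ∈ range (k' + 1), (2 * (a + 1) + μ + 2 + 2 * i)
          = (∏ i ∈ range k', (2 * a + (μ + 2) + 2 + 2 * i)) * (2 * a + 2 * k' + μ + 4) := by
        rw [Finset.prod_range_succ]
        rw [Finset.prod_congr rfl
          (fun i _ => show 2 * (a + 1) + μ + 2 + 2 * i = 2 * a + (μ + 2) + 2 + 2 * i by omega)]
        rw [show 2 * (a + 1) + μ + 2 + 2 * k' = 2 * a + 2 * k' + μ + 4 by omega]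
      have ihk := ih (k' + 1) μ
      have ihk' := ih k' (μ + 2)
      calc (a + 1) * ((∏ i ∈ range (k' + 1), (μ + 2 + 2 * i)) * S (a + 1) (k' + 1) μ)
          = (∏ i ∈ range (k' + 1), (μ + 2 + 2 * i)) * ((a + 1) * S (a + 1) (k' + 1) μ) := by
            ring
        _ = (∏ i ∈ range (k' + 1), (μ + 2 + 2 * i))
              * ((a + k' + μ + 2) * S a (k' + 1) μ + (2 * (μ + 1)) * S a k' (μ + 2)) := by
            rw [R1]
        _ = (a + k' + μ + 2) * ((∏ i ∈ range (k' + 1), (μ + 2 + 2 * i)) * S a (k' + 1) μ)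
            + 2 * (μ + 1) * ((∏ i ∈ range (k' + 1), (μ + 2 + 2 * i)) * S a k' (μ + 2)) := by
            ring
        _ = (a + k' + μ + 2) * ((a + (k' + 1) + μ).choose a * (((k' + 1) + μ).choose (k' + 1)
              * ∏ i ∈ range (k' + 1), (2 * a + μ + 2 + 2 * i)))
            + 2 * (μ + 1) * ((μ + 2) * ((∏ i ∈ range k', (μ + 2 + 2 + 2 * i))
              * S a k' (μ + 2))) := by
            rw [ihk, Pfact]
            ring
        _ = (a + k' + μ + 2) * ((a + (k' + 1) + μ).choose a * (((k' + 1) + μ).choose (k' + 1)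
              * ∏ i ∈ range (k' + 1), (2 * a + μ + 2 + 2 * i)))
            + 2 * (μ + 1) * ((μ + 2) * ((a + k' + (μ + 2)).choose a
              * ((k' + (μ + 2)).choose k' * ∏ i ∈ range k', (2 * a + (μ + 2) + 2 + 2 * i)))) := by
            rw [ihk']
        _ = (a + 1) * ((a + 1 + (k' + 1) + μ).choose (a + 1) * (((k' + 1) + μ).choose (k' + 1)
              * ∏ i ∈ range (k' + 1), (2 * (a + 1) + μ + 2 + 2 * i))) := by
            rw [Qfact1, Qfact2,
              show a + (k' + 1) + μ = a + k' + μ + 1 by omega,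
              show (k' + 1) + μ = k' + μ + 1 by omega,
              show a + k' + (μ + 2) = a + k' + μ + 2 by omega,
              show k' + (μ + 2) = k' + μ + 2 by omega,
              show a + 1 + (k' + 1) + μ = a + k' + μ + 2 by omega]
            have core := CORE a k' μ
            set Q' := ∏ i ∈ range k', (2 * a + (μ + 2) + 2 + 2 * i) with hQ'
            calc (a + k' + μ + 2) * ((a + k' + μ + 1).choose a * ((k' + μ + 1).choose (k' + 1)
                  * ((2 * a + μ + 2) * Q')))
                + 2 * (μ + 1) * ((μ + 2) * ((a + k' + μ + 2).choose a
                  * ((k' + μ + 2).choose k' * Q')))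
                = ((a + k' + μ + 2) * ((2 * a + μ + 2) * ((a + k' + μ + 1).choose a
                    * (k' + μ + 1).choose (k' + 1)))
                  + 2 * ((μ + 1) * ((μ + 2) * ((a + k' + μ + 2).choose a
                    * (k' + μ + 2).choose k')))) * Q' := by ring
              _ = ((a + 1) * ((a + k' + μ + 2).choose (a + 1) * ((k' + μ + 1).choose (k' + 1)
                    * (2 * a + 2 * k' + μ + 4)))) * Q' := by rw [core]
              _ = (a + 1) * ((a + k' + μ + 2).choose (a + 1) * ((k' + μ + 1).choose (k' + 1)
                    * (Q' * (2 * a + 2 * k' + μ + 4)))) := by ring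


/-- Vandermonde over compositions, unshifted -/
lemma A2z (M n : ℕ) (c : Fin (M+1) → ℕ) :
    ∑ R ∈ antidiagonalTuple (M+1) n, ∏ j, (R j).choose (c j)
      = (n + M).choose ((∑ j, c j) + M) := by
  have h := sum_adT_choose M n (fun _ => 0) c
  simpa using h

lemma coord_le {m t : ℕ} {x : Fin m → ℕ} (hx : x ∈ antidiagonalTuple m t) (j : Fin m) :
    x j ≤ t := by
  rw [mem_antidiagonalTuple] at hx
  calc x j ≤ ∑ i, x i :=
        Finset.single_le_sum (f := x) (fun i _ => Nat.zero_le _) (Finset.mem_univ j)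
    _ = t := hx

/-- main reduction: the Fock double sum collapses to a single sum -/
lemma mainA (M n k : ℕ) :
    (∑ R ∈ antidiagonalTuple (M+1) n,
      ∑ b ∈ (antidiagonalTuple (M+1) k).filter (fun b => ∀ j, b j ≤ R j),
        ∏ j, ((R j).choose (b j)) ^ 2)
      = ∑ T ∈ range (k+1),
          (n + M).choose (k + T + M) * ((k + T + M).choose (T + T + M)) * D (M+1) T := by
  -- step 1: drop the filter
  have step1 : ∀ R : Fin (M+1) → ℕ,
      ∑ b ∈ (antidiagonalTuple (M+1) k).filter (fun b => ∀ j, b j ≤ R j),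
        ∏ j, ((R j).choose (b j)) ^ 2
      = ∑ b ∈ antidiagonalTuple (M+1) k, ∏ j, ((R j).choose (b j)) ^ 2 := by
    intro R
    apply Finset.sum_filter_of_ne
    intro b _ hne j
    by_contra hj
    apply hne
    apply Finset.prod_eq_zero (Finset.mem_univ j)
    rw [Nat.choose_eq_zero_of_lt (by omega), Nat.zero_pow (by norm_num)]
  rw [Finset.sum_congr rfl fun R _ => step1 R, Finset.sum_comm]
  -- step 2: for fixed b, expand the square and do the R-sum
  have step2 : ∀ b ∈ antidiagonalTuple (M+1) k,
      ∑ R ∈ antidiagonalTuple (M+1) n, ∏ j, ((R j).choose (b j)) ^ 2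
        = ∑ x ∈ Fintype.piFinset (fun _ : Fin (M+1) => range (k+1)),
            (n + M).choose ((k + ∑ j, x j) + M)
              * ∏ j, ((b j + x j).choose (b j) * (b j).choose (x j)) := by
    intro b hb
    have hbk : ∀ j, b j ≤ k := fun j => coord_le hb j
    have expand : ∀ R : Fin (M+1) → ℕ,
        ∏ j, ((R j).choose (b j)) ^ 2
          = ∑ x ∈ Fintype.piFinset (fun _ : Fin (M+1) => range (k+1)),
              ∏ j, ((R j).choose (b j + x j)
                * ((b j + x j).choose (b j) * (b j).choose (x j))) := by
      intro R
      calc ∏ j, ((R j).choose (b j)) ^ 2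
          = ∏ j, ∑ t ∈ range (k+1), ((R j).choose (b j + t)
              * ((b j + t).choose (b j) * (b j).choose t)) := by
            apply Finset.prod_congr rfl
            intro j _
            rw [A1ext (R j) (b j) k (hbk j)]
            exact Finset.sum_congr rfl fun t _ => by ring
        _ = _ := Finset.prod_univ_sum _ _
    rw [Finset.sum_congr rfl fun R _ => expand R, Finset.sum_comm]
    apply Finset.sum_congr rfl
    intro x _
    have split : ∀ R : Fin (M+1) → ℕ,
        ∏ j, ((R j).choose (b j + x j) * ((b j + x j).choose (b j) * (b j).choose (x j)))
          = (∏ j, (R j).choose (b j + x j))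
            * ∏ j, ((b j + x j).choose (b j) * (b j).choose (x j)) :=
      fun R => Finset.prod_mul_distrib
    rw [Finset.sum_congr rfl fun R _ => split R, ← Finset.sum_mul,
      A2z M n (fun j => b j + x j)]
    congr 2
    rw [Finset.sum_add_distrib, mem_antidiagonalTuple.mp hb]
  rw [Finset.sum_congr rfl step2]
  -- step 3: fiber the x-sum by total weight
  have hmaps : ∀ x ∈ Fintype.piFinset (fun _ : Fin (M+1) => range (k+1)),
      (∑ j, x j) ∈ range ((M+1) * k + 1) := by
    intro x hx
    rw [Finset.mem_range]
    have hxj : ∀ j, x j ≤ k := by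
      intro j
      have := (Fintype.mem_piFinset.mp hx) j
      rw [Finset.mem_range] at this
      omega
    calc ∑ j, x j ≤ ∑ _j : Fin (M+1), k := Finset.sum_le_sum fun j _ => hxj j
      _ = (M+1) * k := by rw [Finset.sum_const, Finset.card_univ, Fintype.card_fin, smul_eq_mul]
      _ < (M+1) * k + 1 := by omega
  have step3 : ∀ b ∈ antidiagonalTuple (M+1) k,
      ∑ x ∈ Fintype.piFinset (fun _ : Fin (M+1) => range (k+1)),
          (n + M).choose ((k + ∑ j, x j) + M)
            * ∏ j, ((b j + x j).choose (b j) * (b j).choose (x j))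
        = ∑ T ∈ range ((M+1) * k + 1),
            ∑ x ∈ (Fintype.piFinset (fun _ : Fin (M+1) => range (k+1))).filter
                (fun x => (∑ j, x j) = T),
              (n + M).choose ((k + T) + M)
                * ∏ j, ((b j + x j).choose (b j) * (b j).choose (x j)) := by
    intro b _
    rw [← Finset.sum_fiberwise_of_maps_to hmaps]
    apply Finset.sum_congr rfl
    intro T _
    apply Finset.sum_congr rfl
    intro x hx
    rw [(Finset.mem_filter.mp hx).2]
  rw [Finset.sum_congr rfl step3, Finset.sum_comm]
  -- step 4: evaluate each fiber
  have step4 : ∀ T ∈ range ((M+1) * k + 1),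
      (∑ b ∈ antidiagonalTuple (M+1) k,
        ∑ x ∈ (Fintype.piFinset (fun _ : Fin (M+1) => range (k+1))).filter
            (fun x => (∑ j, x j) = T),
          (n + M).choose ((k + T) + M)
            * ∏ j, ((b j + x j).choose (b j) * (b j).choose (x j)))
        = if T ≤ k then
            (n + M).choose (k + T + M) * ((k + T + M).choose (T + T + M)) * D (M+1) T
          else 0 := by
    intro T _
    rcases le_or_gt T k with hTk | hTk
    · rw [if_pos hTk]
      have fiber_eq : (Fintype.piFinset (fun _ : Fin (M+1) => range (k+1))).filter
          (fun x => (∑ j, x j) = T) = antidiagonalTuple (M+1) T := by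
        ext x
        simp only [Finset.mem_filter, Fintype.mem_piFinset, Finset.mem_range,
          mem_antidiagonalTuple]
        constructor
        · rintro ⟨_, h⟩; exact h
        · intro h
          refine ⟨fun j => ?_, h⟩
          have := coord_le (mem_antidiagonalTuple.mpr h) j
          omega
      rw [fiber_eq, Finset.sum_comm]
      have inner : ∀ τ ∈ antidiagonalTuple (M+1) T,
          (∑ b ∈ antidiagonalTuple (M+1) k,
            (n + M).choose ((k + T) + M)
              * ∏ j, ((b j + τ j).choose (b j) * (b j).choose (τ j)))
          = (n + M).choose (k + T + M)
              * ((k + T + M).choose (T + T + M) * ∏ j, Nat.centralBinom (τ j)) := by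
        intro τ hτ
        have hsum : (∑ j, τ j) = T := mem_antidiagonalTuple.mp hτ
        have pw : ∀ b : Fin (M+1) → ℕ,
            ∏ j, ((b j + τ j).choose (b j) * (b j).choose (τ j))
              = (∏ j, (b j + τ j).choose (τ j + τ j)) * ∏ j, Nat.centralBinom (τ j) := by
          intro b
          rw [← Finset.prod_mul_distrib]
          apply Finset.prod_congr rfl
          intro j _
          rw [PW2 (b j) (τ j)]
          congr 1
          simp only [Nat.centralBinom, two_mul]
        rw [← Finset.mul_sum, Finset.sum_congr rfl fun b _ => pw b, ← Finset.sum_mul]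
        have hA := sum_adT_choose M k τ τ
        rw [hsum] at hA
        rw [hA]
      rw [Finset.sum_congr rfl inner, ← Finset.mul_sum, ← Finset.mul_sum]
      simp only [D]
      ring
    · rw [if_neg (by omega)]
      apply Finset.sum_eq_zero
      intro b hb
      apply Finset.sum_eq_zero
      intro x hx
      obtain ⟨_, hxT⟩ := Finset.mem_filter.mp hx
      have hex : ∃ j, b j < x j := by
        by_contra hall
        push_neg at hall
        have : (∑ j, x j) ≤ ∑ j, b j := Finset.sum_le_sum fun j _ => hall j
        rw [hxT, mem_antidiagonalTuple.mp hb] at this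
        omega
      obtain ⟨j, hj⟩ := hex
      have hz : (b j + x j).choose (b j) * (b j).choose (x j) = 0 := by
        rw [Nat.choose_eq_zero_of_lt hj, Nat.mul_zero]
      rw [Finset.prod_eq_zero (Finset.mem_univ j) hz, Nat.mul_zero]
  rw [Finset.sum_congr rfl step4]
  have hsub : range (k+1) ⊆ range ((M+1) * k + 1) := by
    apply Finset.range_subset_range.mpr
    nlinarith [Nat.le_mul_of_pos_left k (Nat.succ_pos M)]
  rw [← Finset.sum_subset hsub (fun T _ hT => by
    rw [if_neg]
    rw [Finset.mem_range] at hT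
    omega)]
  apply Finset.sum_congr rfl
  intro T hT
  rw [Finset.mem_range] at hT
  rw [if_pos (by omega)]


/-- trinomial symmetry -/
lemma CHID (a k M : ℕ) :
    (a + k + M).choose a * (k + M).choose k
      = (a + k + M).choose (a + k) * (a + k).choose k := by
  have hsym : (a + k).choose k = (a + k).choose a := by
    have := Nat.choose_symm (show a ≤ a + k by omega)
    rwa [show a + k - a = k by omega] at this
  have h := Nat.choose_mul (n := a + k + M) (k := a + k) (show a ≤ a + k by omega)
  rw [show a + k + M - a = k + M by omega, show a + k - a = k by omega] at h
  rw [hsym, h]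

end Stmt10

open Finset

/-- Summing the irrep purities `g` over all Fock states:
`(Π_{i<k} (m+1+2i)) · Σ_{R ∈ Φ_m^n} Σ_{b ≤ R, Σb = k} Π_j C(R j, b j)²
  = C(n+m-1, n) · C(n, k) · Π_{i<k} (2(n-k)+m+1+2i)`. -/
theorem stmt10 (m n k : ℕ) (hm : 1 ≤ m) (hk : k ≤ n) :
    (∏ i ∈ Finset.range k, (m + 1 + 2 * i)) *
        ∑ R ∈ Finset.Nat.antidiagonalTuple m n,
          ∑ b ∈ (Finset.Nat.antidiagonalTuple m k).filter (fun b => ∀ j, b j ≤ R j),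
            ∏ j, ((R j).choose (b j)) ^ 2
      = (n + m - 1).choose n * n.choose k *
          ∏ i ∈ Finset.range k, (2 * (n - k) + m + 1 + 2 * i) := by
  obtain ⟨M, rfl⟩ : ∃ M, m = M + 1 := ⟨m - 1, by omega⟩
  obtain ⟨a, rfl⟩ : ∃ a, n = a + k := ⟨n - k, by omega⟩
  rw [Stmt10.mainA M (a + k) k]
  rw [show a + k + (M + 1) - 1 = a + k + M by omega, show a + k - k = a by omega]
  rw [Finset.prod_congr rfl
    (fun i _ => show M + 1 + 1 + 2 * i = M + 2 + 2 * i by omega)]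
  rw [Finset.prod_congr rfl
    (fun i _ => show 2 * a + (M + 1) + 1 + 2 * i = 2 * a + M + 2 + 2 * i by omega)]
  have hS : (∑ T ∈ range (k + 1),
      (a + k + M).choose (k + T + M) * ((k + T + M).choose (T + T + M)) * Stmt10.D (M + 1) T)
      = Stmt10.S a k M := rfl
  rw [hS, Stmt10.KL a k M, ← Nat.mul_assoc, Stmt10.CHID a k M]
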